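/- (Lower bound for the Gaussian kernel, Lemma 3.2, core estimate) Suppose (1/4)b_B r² ≤ t − τ ≤ b_B r², C_0^{-1}(u) ≤ (1/(λ_1 u^{2n+1})) I_N for 0 < u ≤ b_B, ‖E(σ)‖ ≤ 2 for |σ| ≤ b_B, and |D_{1/r}x|, |D_{1/r}ξ| ≤ 1. Then ⟨C_0^{-1}(t−τ)(x − E(t−τ)ξ), (x − E(t−τ)ξ)⟩ ≤ (10/λ_1)(4/b_B)^{2n+1}, and therefore Γ_{s,β}(ζ^{-1}∘z) ≥ (b_B r²)^{-sQ/2} exp(−(5/(2λ_1β))(4/b_B)^{2n+1}). -/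
import Mathlib


open scoped RealInnerProductSpace

/-- Lower bound for the Gaussian kernel (Lemma 3.2, core estimate): under the dilation
relation for `C_0⁻¹`, the upper bound `C_0⁻¹(u) ≤ (1/(λ1 u^{2n+1})) I`, `‖E‖ ≤ 2`,
`|D_{1/r}x|, |D_{1/r}ξ| ≤ 1` and `(1/4) b_B r² ≤ t − τ ≤ b_B r²`, the quadratic form is
at most `(10/λ1)(4/b_B)^{2n+1}`, and therefore
`Γ_{s,β}(ζ⁻¹∘z) ≥ (b_B r²)^{−sQ/2} exp(−(5/(2λ1β))(4/b_B)^{2n+1})`. -/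
theorem stmt17 (N n : ℕ) (Q : ℕ) (b_B lam1 s β r t τ : ℝ)
    (Cinv Edil D : ℝ → EuclideanSpace ℝ (Fin N) → EuclideanSpace ℝ (Fin N))
    (x ξ : EuclideanSpace ℝ (Fin N))
    (hr : 0 < r) (hlam1 : 0 < lam1) (hbB : 0 < b_B) (hs : 0 < s) (hβ : 0 < β)
    (hlow : (1 / 4) * b_B * r ^ 2 ≤ t - τ) (hub : t - τ ≤ b_B * r ^ 2)
    (hsplit : ∀ w : EuclideanSpace ℝ (Fin N),
      ⟪Cinv (t - τ) w, w⟫ = ⟪Cinv ((t - τ) / r ^ 2) (D (1 / r) w), D (1 / r) w⟫)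
    (hCup : ∀ u : ℝ, 0 < u → u ≤ b_B → ∀ v : EuclideanSpace ℝ (Fin N),
      ⟪Cinv u v, v⟫ ≤ (1 / (lam1 * u ^ (2 * n + 1))) * ‖v‖ ^ 2)
    (hDlin : ∀ a b : EuclideanSpace ℝ (Fin N),
      D (1 / r) (a - b) = D (1 / r) a - D (1 / r) b)
    (hcomm : D (1 / r) (Edil (t - τ) ξ) = Edil ((t - τ) / r ^ 2) (D (1 / r) ξ))
    (hE2 : ∀ v : EuclideanSpace ℝ (Fin N), ‖Edil ((t - τ) / r ^ 2) v‖ ≤ 2 * ‖v‖)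
    (hx : ‖D (1 / r) x‖ ≤ 1) (hξ : ‖D (1 / r) ξ‖ ≤ 1) :
    ⟪Cinv (t - τ) (x - Edil (t - τ) ξ), x - Edil (t - τ) ξ⟫ ≤
        (10 / lam1) * (4 / b_B) ^ (2 * n + 1) ∧
    (b_B * r ^ 2) ^ (-(s * (Q : ℝ) / 2)) *
        Real.exp (-(5 / (2 * lam1 * β)) * (4 / b_B) ^ (2 * n + 1)) ≤
      (t - τ) ^ (-(s * (Q : ℝ) / 2)) *
        Real.exp (-(1 / (4 * β)) *
          ⟪Cinv (t - τ) (x - Edil (t - τ) ξ), x - Edil (t - τ) ξ⟫) := by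

  have hu0 : 0 < t - τ := lt_of_lt_of_le (by positivity) hlow
  set u : ℝ := (t - τ) / r ^ 2 with hu
  have hr2 : (0:ℝ) < r ^ 2 := by positivity
  have hu2 : u ≤ b_B := by
    rw [hu, div_le_iff₀ hr2]; linarith
  have hu1 : b_B / 4 ≤ u := by
    rw [hu, le_div_iff₀ hr2]; linarith
  have hupos : 0 < u := lt_of_lt_of_le (by positivity) hu1
  clear_value u
  set w : EuclideanSpace ℝ (Fin N) := x - Edil (t - τ) ξ with hw
  clear_value w
  have hDw : ‖D (1 / r) w‖ ≤ 3 := by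
    rw [hw, hDlin, hcomm]
    calc ‖D (1 / r) x - Edil u (D (1 / r) ξ)‖
        ≤ ‖D (1 / r) x‖ + ‖Edil u (D (1 / r) ξ)‖ := norm_sub_le _ _
      _ ≤ 1 + 2 * 1 := by
          have := hE2 (D (1 / r) ξ)
          have h2 : 2 * ‖D (1 / r) ξ‖ ≤ 2 * 1 := by linarith
          linarith
      _ = 3 := by norm_num
  have hDw2 : ‖D (1 / r) w‖ ^ 2 ≤ 10 := by
    nlinarith [norm_nonneg (D (1 / r) w)]
  have hinv : 1 / u ≤ 4 / b_B := by
    rw [div_le_div_iff₀ hupos hbB]; linarith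
  have hpow : (1 / u) ^ (2 * n + 1) ≤ (4 / b_B) ^ (2 * n + 1) :=
    pow_le_pow_left₀ (by positivity) hinv _
  have hq : ⟪Cinv (t - τ) w, w⟫ ≤ (10 / lam1) * (4 / b_B) ^ (2 * n + 1) := by
    calc ⟪Cinv (t - τ) w, w⟫ = ⟪Cinv u (D (1 / r) w), D (1 / r) w⟫ := hsplit w
      _ ≤ (1 / (lam1 * u ^ (2 * n + 1))) * ‖D (1 / r) w‖ ^ 2 := hCup u hupos hu2 _
      _ ≤ (1 / (lam1 * u ^ (2 * n + 1))) * 10 := by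
          apply mul_le_mul_of_nonneg_left hDw2
          positivity
      _ = (10 / lam1) * (1 / u) ^ (2 * n + 1) := by
          rw [div_pow, one_pow]
          field_simp
      _ ≤ (10 / lam1) * (4 / b_B) ^ (2 * n + 1) := by
          apply mul_le_mul_of_nonneg_left hpow
          positivity
  refine ⟨hq, ?_⟩
  have h1 : (b_B * r ^ 2) ^ (-(s * (Q : ℝ) / 2)) ≤ (t - τ) ^ (-(s * (Q : ℝ) / 2)) := by
    apply Real.rpow_le_rpow_of_nonpos hu0 hub
    have : (0:ℝ) ≤ s * (Q : ℝ) / 2 := by positivity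
    linarith
  have h2 : Real.exp (-(5 / (2 * lam1 * β)) * (4 / b_B) ^ (2 * n + 1)) ≤
      Real.exp (-(1 / (4 * β)) * ⟪Cinv (t - τ) w, w⟫) := by
    apply Real.exp_le_exp.mpr
    have hb : (0:ℝ) < 1 / (4 * β) := by positivity
    have := mul_le_mul_of_nonneg_left hq hb.le
    have heq : (1 / (4 * β)) * ((10 / lam1) * (4 / b_B) ^ (2 * n + 1)) =
        (5 / (2 * lam1 * β)) * (4 / b_B) ^ (2 * n + 1) := by
      field_simp; ring
    nlinarith
  calc (b_B * r ^ 2) ^ (-(s * (Q : ℝ) / 2)) *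
        Real.exp (-(5 / (2 * lam1 * β)) * (4 / b_B) ^ (2 * n + 1))
      ≤ (t - τ) ^ (-(s * (Q : ℝ) / 2)) *
        Real.exp (-(5 / (2 * lam1 * β)) * (4 / b_B) ^ (2 * n + 1)) := by
        apply mul_le_mul_of_nonneg_right h1 (Real.exp_nonneg _)
    _ ≤ (t - τ) ^ (-(s * (Q : ℝ) / 2)) *
        Real.exp (-(1 / (4 * β)) * ⟪Cinv (t - τ) w, w⟫) := by
        apply mul_le_mul_of_nonneg_left h2 (Real.rpow_nonneg hu0.le _)
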